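/- Let p, q, r, s, t ∈ ℂ* satisfy t = p·r, s = p·r/q, and r + conj(p)·t = p·conj(q) + conj(r)·s = conj(s) + conj(t)·q. Then |q| = |p| or |q| = 1/|p|, and moreover |r| = 1 or |r| = |q|². -/

import Mathlib

theorem stmt8 (p q r s t : ℂ) (hp : p ≠ 0) (hq : q ≠ 0) (hr : r ≠ 0)
    (hs : s ≠ 0) (ht : t ≠ 0)
    (h1 : t = p * r) (h2 : s = p * r / q)
    (h3 : r + (starRingEnd ℂ) p * t = p * (starRingEnd ℂ) q + (starRingEnd ℂ) r * s)
    (h4 : p * (starRingEnd ℂ) q + (starRingEnd ℂ) r * s =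
        (starRingEnd ℂ) s + (starRingEnd ℂ) t * q) :
    (‖q‖ = ‖p‖ ∨ ‖q‖ = 1 / ‖p‖) ∧
      (‖r‖ = 1 ∨ ‖r‖ = ‖q‖ ^ 2) := by
  subst h1 h2
  have hcq : (starRingEnd ℂ) q ≠ 0 := by simpa using hq
  simp only [map_div₀, map_mul] at h3 h4
  field_simp at h3 h4
  have key1 : p * (q * (starRingEnd ℂ) q + r * (starRingEnd ℂ) r)
      = r * q * (1 + p * (starRingEnd ℂ) p) := by linear_combination -h3
  have key2 : r * (q * (starRingEnd ℂ) q) * (1 + p * (starRingEnd ℂ) p)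
      = (starRingEnd ℂ) p * (starRingEnd ℂ) r * q * (1 + q * (starRingEnd ℂ) q) := by
    linear_combination (starRingEnd ℂ) q * h3 + h4
  set a := ‖p‖ with ha
  set b := ‖q‖ with hb
  set c := ‖r‖ with hc
  have ha0 : 0 < a := by simpa [ha] using (norm_pos_iff.mpr hp)
  have hb0 : 0 < b := by simpa [hb] using (norm_pos_iff.mpr hq)
  have hc0 : 0 < c := by simpa [hc] using (norm_pos_iff.mpr hr)
  rw [Complex.mul_conj, Complex.mul_conj, Complex.mul_conj] at key1
  rw [Complex.mul_conj, Complex.mul_conj] at key2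
  have E1 : a * (b ^ 2 + c ^ 2) = c * b * (1 + a ^ 2) := by
    have := congrArg norm key1
    simp only [norm_mul, Complex.norm_real, Real.norm_eq_abs] at this
    rw [show ((Complex.normSq q : ℂ) + (Complex.normSq r : ℂ)) = ((Complex.normSq q + Complex.normSq r : ℝ) : ℂ) by push_cast; ring,
        show ((1 : ℂ) + (Complex.normSq p : ℂ)) = ((1 + Complex.normSq p : ℝ) : ℂ) by push_cast; ring] at this
    simp only [norm_mul, Complex.norm_real, Real.norm_eq_abs] at this
    rw [abs_of_nonneg (add_nonneg (Complex.normSq_nonneg q) (Complex.normSq_nonneg r)),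
        abs_of_nonneg (show (0:ℝ) ≤ 1 + Complex.normSq p by linarith [Complex.normSq_nonneg p])] at this
    rw [← Complex.sq_norm, ← Complex.sq_norm, ← Complex.sq_norm] at this
    linarith [this]
  have E2 : c * b ^ 2 * (1 + a ^ 2) = a * c * b * (1 + b ^ 2) := by
    have := congrArg norm key2
    rw [show ((1 : ℂ) + (Complex.normSq p : ℂ)) = ((1 + Complex.normSq p : ℝ) : ℂ) by push_cast; ring,
        show ((1 : ℂ) + (Complex.normSq q : ℂ)) = ((1 + Complex.normSq q : ℝ) : ℂ) by push_cast; ring] at this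
    simp only [norm_mul, Complex.norm_real, Real.norm_eq_abs, Complex.norm_conj] at this
    rw [abs_of_nonneg (Complex.normSq_nonneg q),
        abs_of_nonneg (show (0:ℝ) ≤ 1 + Complex.normSq p by linarith [Complex.normSq_nonneg p]),
        abs_of_nonneg (show (0:ℝ) ≤ 1 + Complex.normSq q by linarith [Complex.normSq_nonneg q])] at this
    rw [← Complex.sq_norm, ← Complex.sq_norm] at this
    linarith [this]
  have E2' : b * (1 + a ^ 2) = a * (1 + b ^ 2) := by
    have hcb : c * b ≠ 0 := by positivity
    have h' : (c * b) * (b * (1 + a ^ 2)) = (c * b) * (a * (1 + b ^ 2)) := by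
      linear_combination E2
    exact mul_left_cancel₀ hcb h'
  have hfac : (b - a) * (1 - a * b) = 0 := by linear_combination E2'
  rcases mul_eq_zero.mp hfac with hba | hab
  · have hba' : b = a := by linarith
    constructor
    · exact Or.inl hba'
    · have : (c - 1) * (c - a ^ 2) = 0 := by
        have := E1
        rw [hba'] at this
        nlinarith [this, ha0]
      rcases mul_eq_zero.mp this with h | h
      · exact Or.inl (by linarith)
      · exact Or.inr (by rw [hba']; linarith)
  · have hab' : a * b = 1 := by linarith
    constructor
    · right
      field_simp
      linarith [hab']
    · have : (c - 1) * (a * c - b) = 0 := by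
        linear_combination E1 - (b - a * c) * (by linarith : a * b - 1 = 0)
      rcases mul_eq_zero.mp this with h | h
      · exact Or.inl (by linarith)
      · right
        have : c - b ^ 2 = 0 := by nlinarith [h, hab']
        linarith
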